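/- For every (x,v) ∈ ℝ³ × ℝ³ with v₁² + v₂² + v₃² = 1 and v₃² ≠ 1, the Lie bracket [X̃₁, X̃₀] evaluated at (x,v) equals (−sin x₃, cos x₃, 0, 0, 0, 0) + (v₃²(v₁ cos x₃ + v₂ sin x₃)/√(1−v₃²)) · (0, 0, 0, e₄(v)) + (v₃(v₂ cos x₃ − v₁ sin x₃)/√(1−v₃²)) · (0, 0, 0, e₅(v)). -/

import Mathlib

/-- The phase space `ℝ³ × ℝ³` with coordinates `(x₁,x₂,x₃,v₁,v₂,v₃)`. -/
abbrev E6 : Type := (Fin 3 → ℝ) × (Fin 3 → ℝ)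

/-- The Lie bracket of two vector fields on a normed space:
`[V,W](x) = DW(x)·V(x) − DV(x)·W(x)`. -/
noncomputable def lieBracket {E : Type*} [NormedAddCommGroup E] [NormedSpace ℝ E]
    (V W : E → E) : E → E :=
  fun x => fderiv ℝ W x (V x) - fderiv ℝ V x (W x)

/-- The drift vector field `X̃₀` of the projective process. -/
noncomputable def Xt0 : E6 → E6 := fun w =>
  let x := w.1; let v := w.2
  let α : ℝ := -(v 2) * v 0 * Real.sin (x 2) + v 2 * v 1 * Real.cos (x 2)
  (![Real.cos (x 2), Real.sin (x 2), 1],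
   ![-(v 2) * Real.sin (x 2) - α * v 0, v 2 * Real.cos (x 2) - α * v 1, -(α * v 2)])

/-- The vector field `X̃₁ = (0,0,1,0,0,0)`. -/
noncomputable def Xt1 : E6 → E6 := fun _ => (![0, 0, 1], ![0, 0, 0])

/-- The common shape of `X̃₂,…,X̃₅`. -/
noncomputable def XtGen (B : (Fin 3 → ℝ) → ℝ) (c : E6 → ℝ) : E6 → E6 := fun w =>
  let v := w.2
  (![0, 0, B w.1],
   ![c w * (-(v 2) * v 0), c w * (-(v 2) * v 1), c w * (1 - (v 2) ^ 2)])

noncomputable def Xt2 : E6 → E6 :=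
  XtGen (fun x => Real.sin (x 0)) (fun w => w.2 0 * Real.cos (w.1 0))

noncomputable def Xt3 : E6 → E6 :=
  XtGen (fun x => Real.cos (x 0)) (fun w => -(w.2 0) * Real.sin (w.1 0))

noncomputable def Xt4 : E6 → E6 :=
  XtGen (fun x => Real.sin (x 1)) (fun w => w.2 1 * Real.cos (w.1 1))

noncomputable def Xt5 : E6 → E6 :=
  XtGen (fun x => Real.cos (x 1)) (fun w => -(w.2 1) * Real.sin (w.1 1))

/-- `e₄(v) = (1/√(1−v₃²))·(−v₃v₁, −v₃v₂, 1−v₃²)`. -/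
noncomputable def e₄ (v : Fin 3 → ℝ) : Fin 3 → ℝ :=
  (Real.sqrt (1 - (v 2) ^ 2))⁻¹ • ![-(v 2) * v 0, -(v 2) * v 1, 1 - (v 2) ^ 2]

/-- `e₅(v) = (1/√(1−v₃²))·(−v₂, v₁, 0)`. -/
noncomputable def e₅ (v : Fin 3 → ℝ) : Fin 3 → ℝ :=
  (Real.sqrt (1 - (v 2) ^ 2))⁻¹ • ![-(v 1), v 0, 0]

/-- For `(x,v)` with `|v| = 1` and `v₃² ≠ 1`,
`[X̃₁, X̃₀](x,v) = (−sin x₃, cos x₃, 0, 0, 0, 0)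
  + (v₃²(v₁ cos x₃ + v₂ sin x₃)/√(1−v₃²))·(0,0,0,e₄(v))
  + (v₃(v₂ cos x₃ − v₁ sin x₃)/√(1−v₃²))·(0,0,0,e₅(v))`. -/
theorem statement5 (x v : Fin 3 → ℝ)
    (hv : (v 0) ^ 2 + (v 1) ^ 2 + (v 2) ^ 2 = 1) (hv3 : (v 2) ^ 2 ≠ 1) :
    lieBracket Xt1 Xt0 (x, v)
      = ((![-Real.sin (x 2), Real.cos (x 2), 0], ![0, 0, 0]) : E6)
        + ((v 2) ^ 2 * (v 0 * Real.cos (x 2) + v 1 * Real.sin (x 2)) / Real.sqrt (1 - (v 2) ^ 2))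
            • ((![0, 0, 0], e₄ v) : E6)
        + (v 2 * (v 1 * Real.cos (x 2) - v 0 * Real.sin (x 2)) / Real.sqrt (1 - (v 2) ^ 2))
            • ((![0, 0, 0], e₅ v) : E6) := by
  set u : E6 := (![0, 0, 1], ![0, 0, 0]) with hu
  -- the explicit value of the directional derivative of Xt0 in direction u
  set m : E6 :=
      ((![-Real.sin (x 2), Real.cos (x 2), 0] : Fin 3 → ℝ),
       (![-(v 2) * Real.cos (x 2) - (-(v 2) * v 0 * Real.cos (x 2) - v 2 * v 1 * Real.sin (x 2)) * v 0,
          v 2 * -Real.sin (x 2) - (-(v 2) * v 0 * Real.cos (x 2) - v 2 * v 1 * Real.sin (x 2)) * v 1,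
          -((-(v 2) * v 0 * Real.cos (x 2) - v 2 * v 1 * Real.sin (x 2)) * v 2)] : Fin 3 → ℝ)) with hm
  -- differentiability of Xt0
  have hdiff : DifferentiableAt ℝ Xt0 (x, v) := by
    have hX : Xt0 = fun w : E6 =>
        ((![Real.cos (w.1 2), Real.sin (w.1 2), 1] : Fin 3 → ℝ),
         (![-(w.2 2) * Real.sin (w.1 2) - (-(w.2 2) * w.2 0 * Real.sin (w.1 2) + w.2 2 * w.2 1 * Real.cos (w.1 2)) * w.2 0,
            w.2 2 * Real.cos (w.1 2) - (-(w.2 2) * w.2 0 * Real.sin (w.1 2) + w.2 2 * w.2 1 * Real.cos (w.1 2)) * w.2 1,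
            -((-(w.2 2) * w.2 0 * Real.sin (w.1 2) + w.2 2 * w.2 1 * Real.cos (w.1 2)) * w.2 2)] : Fin 3 → ℝ)) := rfl
    rw [hX]
    refine DifferentiableAt.prodMk ?_ ?_ <;>
      refine differentiableAt_pi.mpr fun i => ?_ <;>
      fin_cases i <;> simp <;> fun_prop
  -- the curve through (x,v) in direction u
  have hcurve : (fun t : ℝ => Xt0 ((x, v) + t • u)) = fun t : ℝ =>
      ((![Real.cos (x 2 + t), Real.sin (x 2 + t), 1] : Fin 3 → ℝ),
       (![-(v 2) * Real.sin (x 2 + t) - (-(v 2) * v 0 * Real.sin (x 2 + t) + v 2 * v 1 * Real.cos (x 2 + t)) * v 0,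
          v 2 * Real.cos (x 2 + t) - (-(v 2) * v 0 * Real.sin (x 2 + t) + v 2 * v 1 * Real.cos (x 2 + t)) * v 1,
          -((-(v 2) * v 0 * Real.sin (x 2 + t) + v 2 * v 1 * Real.cos (x 2 + t)) * v 2)] : Fin 3 → ℝ)) := by
    funext t
    have h1 : ((x, v) + t • u).1 2 = x 2 + t := by simp [hu, Matrix.vecHead, Matrix.vecTail]
    have h2 : ∀ i, ((x, v) + t • u).2 i = v i := by
      intro i; fin_cases i <;> simp [hu, Matrix.vecHead, Matrix.vecTail]
    simp only [Xt0, h1, h2]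
  -- derivative of the explicit curve
  have hF : HasDerivAt (fun t : ℝ =>
      ((![Real.cos (x 2 + t), Real.sin (x 2 + t), 1] : Fin 3 → ℝ),
       (![-(v 2) * Real.sin (x 2 + t) - (-(v 2) * v 0 * Real.sin (x 2 + t) + v 2 * v 1 * Real.cos (x 2 + t)) * v 0,
          v 2 * Real.cos (x 2 + t) - (-(v 2) * v 0 * Real.sin (x 2 + t) + v 2 * v 1 * Real.cos (x 2 + t)) * v 1,
          -((-(v 2) * v 0 * Real.sin (x 2 + t) + v 2 * v 1 * Real.cos (x 2 + t)) * v 2)] : Fin 3 → ℝ)))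
      m (0:ℝ) := by
    have hid : HasDerivAt (fun t : ℝ => x 2 + t) 1 0 := (hasDerivAt_id 0).const_add (x 2)
    have hsin : HasDerivAt (fun t : ℝ => Real.sin (x 2 + t)) (Real.cos (x 2)) 0 := by
      simpa using hid.sin
    have hcos : HasDerivAt (fun t : ℝ => Real.cos (x 2 + t)) (-Real.sin (x 2)) 0 := by
      simpa using hid.cos
    have hα : HasDerivAt (fun t : ℝ => -(v 2) * v 0 * Real.sin (x 2 + t) + v 2 * v 1 * Real.cos (x 2 + t))
        (-(v 2) * v 0 * Real.cos (x 2) - v 2 * v 1 * Real.sin (x 2)) 0 := by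
      have := (hsin.const_mul (-(v 2) * v 0)).add (hcos.const_mul (v 2 * v 1))
      exact this.congr_deriv (by ring)
    rw [hm]
    refine HasDerivAt.prodMk ?_ ?_ <;> refine hasDerivAt_pi.mpr fun i => ?_ <;> fin_cases i <;>
      simp only [Matrix.cons_val_zero, Matrix.cons_val_one, Matrix.head_cons, Matrix.cons_val_two,
        Matrix.tail_cons, Fin.isValue]
    · exact hcos
    · exact hsin
    · exact hasDerivAt_const 0 1
    · exact (hsin.const_mul (-(v 2))).sub (hα.mul_const (v 0))
    · exact (hcos.const_mul (v 2)).sub (hα.mul_const (v 1))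
    · exact (hα.mul_const (v 2)).neg
  -- identify the directional derivative
  have hline : HasDerivAt (fun t : ℝ => (x, v) + t • u) u 0 := by
    simpa using ((hasDerivAt_id (0:ℝ)).smul_const u).const_add (x, v)
  have h0 : (x, v) + (0:ℝ) • u = (x, v) := by simp
  have hFd : HasFDerivAt Xt0 (fderiv ℝ Xt0 (x, v)) ((fun t : ℝ => (x, v) + t • u) 0) := by
    rw [show (fun t : ℝ => (x, v) + t • u) 0 = (x, v) from h0]
    exact hdiff.hasFDerivAt
  have hcomp : HasDerivAt (fun t : ℝ => Xt0 ((x, v) + t • u)) (fderiv ℝ Xt0 (x, v) u) 0 :=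
    by have := hFd.comp_hasDerivAt (x := 0) hline; exact this
  rw [hcurve] at hcomp
  have key : fderiv ℝ Xt0 (x, v) u = m := hcomp.unique hF
  -- Xt1 is constant
  have hX1 : lieBracket Xt1 Xt0 (x, v) = fderiv ℝ Xt0 (x, v) u := by
    have hc : fderiv ℝ Xt1 (x, v) = 0 := by
      have h : Xt1 = fun _ : E6 => ((![0, 0, 1], ![0, 0, 0]) : E6) := rfl
      rw [h]
      exact fderiv_const_apply _
    simp [lieBracket, hc, hu, Xt1]
  rw [hX1, key]
  -- final algebra
  have hle : (v 2) ^ 2 ≤ 1 := by nlinarith [sq_nonneg (v 0), sq_nonneg (v 1)]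
  have h1 : (0:ℝ) < 1 - (v 2) ^ 2 := by
    rcases lt_of_le_of_ne hle hv3 with h; linarith
  have hDD : Real.sqrt (1 - (v 2) ^ 2) * Real.sqrt (1 - (v 2) ^ 2) = 1 - (v 2) ^ 2 :=
    Real.mul_self_sqrt h1.le
  have hs0 : Real.sqrt (1 - (v 2) ^ 2) ≠ 0 := (Real.sqrt_pos.mpr h1).ne'
  have h10 : (1:ℝ) - (v 2) ^ 2 ≠ 0 := h1.ne'
  rw [hm]
  refine Prod.ext ?_ ?_
  · funext i; fin_cases i <;> simp [e₄, e₅, Matrix.vecHead, Matrix.vecTail]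
  · funext i
    fin_cases i <;> simp [e₄, e₅, Matrix.vecHead, Matrix.vecTail] <;> field_simp
    · rw [Real.sq_sqrt h1.le]; linear_combination (v 2 * Real.cos (x 2)) * hv
    · rw [Real.sq_sqrt h1.le]; linear_combination (v 2 * Real.sin (x 2)) * hv
    · rw [Real.sq_sqrt h1.le]; ring
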